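/- Let Ω be a finite set, q a probability vector with q(ω) > 0 for all ω, γ ∈ (0,1), h : Ω → ℝ nonconstant, and p* any maximizer of ∑_ω p(ω) h(ω) over the TV ambiguity set P(γ). If ω' is the unique maximizer of h (i.e., h(ω') > h(ω) for all ω ≠ ω'), then p*(ω') ≥ γ > 0. -/

import Mathlib

open Finset

def IsProbVec {Ω : Type*} [Fintype Ω] (p : Ω → ℝ) : Prop :=
  (∀ ω, 0 ≤ p ω) ∧ ∑ ω, p ω = 1

noncomputable def tv {Ω : Type*} [Fintype Ω] (p q : Ω → ℝ) : ℝ :=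
  (1 / 2) * ∑ ω, |p ω - q ω|

def Amb {Ω : Type*} [Fintype Ω] (q : Ω → ℝ) (γ : ℝ) : Set (Ω → ℝ) :=
  {p | IsProbVec p ∧ tv p q ≤ γ}

theorem unique_max_mass_at_least_gamma {Ω : Type*} [Fintype Ω] [Nonempty Ω]
    (q : Ω → ℝ) (hq : IsProbVec q) (hqpos : ∀ ω, 0 < q ω)
    (γ : ℝ) (hγ0 : 0 < γ) (hγ1 : γ < 1) (h : Ω → ℝ)
    (hnonconst : ∃ ω₁ ω₂, h ω₁ ≠ h ω₂)
    (ω' : Ω) (hmax : ∀ ω, ω ≠ ω' → h ω < h ω')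
    (p : Ω → ℝ) (hp : p ∈ Amb q γ)
    (hopt : ∀ p' ∈ Amb q γ, ∑ ω, p' ω * h ω ≤ ∑ ω, p ω * h ω) :
    γ ≤ p ω' ∧ 0 < p ω' := by
  classical
  obtain ⟨⟨hpnn, hpsum⟩, hptv⟩ := hp
  obtain ⟨hqnn, hqsum⟩ := hq
  have habs : ∑ x, |p x - q x| ≤ 2 * γ := by
    unfold tv at hptv; linarith
  have main : γ ≤ p ω' := by
    by_contra hc
    push_neg at hc
    -- Step 1: there is some ω ≠ ω' with p ω > 0
    have hex : ∃ ω, ω ≠ ω' ∧ 0 < p ω := by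
      by_contra hno
      push_neg at hno
      have hz : ∀ ω, ω ≠ ω' → p ω = 0 := fun ω hω => le_antisymm (hno ω hω) (hpnn ω)
      have hone : p ω' = 1 := by
        rw [← hpsum, eq_comm, Finset.sum_eq_single ω']
        · intro b _ hb; exact hz b hb
        · intro hb; exact absurd (Finset.mem_univ ω') hb
      linarith
    -- Perturbation contradiction lemma
    have contra : ∀ ω, ω ≠ ω' → ∀ δ : ℝ, 0 < δ → δ ≤ p ω →
        (∑ x, |(Function.update (Function.update p ω (p ω - δ)) ω' (p ω' + δ)) x - q x| ≤ 2 * γ)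
        → False := by
      intro ω hω δ hδ0 hδp htv'
      set p' := Function.update (Function.update p ω (p ω - δ)) ω' (p ω' + δ) with hp'
      have hne' : ω' ≠ ω := fun e => hω e.symm
      have hval' : p' ω' = p ω' + δ := by simp [hp']
      have hvalω : p' ω = p ω - δ := by
        simp [hp', Function.update_of_ne hω]
      have hother : ∀ x, x ≠ ω' → x ≠ ω → p' x = p x := by
        intro x h1 h2
        simp [hp', Function.update_of_ne h1, Function.update_of_ne h2]
      have key : ∀ F : Ω → ℝ → ℝ, ∑ x, F x (p' x) =
          ∑ x, F x (p x) + (F ω' (p ω' + δ) - F ω' (p ω'))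
            + (F ω (p ω - δ) - F ω (p ω)) := by
        intro F
        have hd : ∑ x ∈ ({ω', ω} : Finset Ω), (F x (p' x) - F x (p x))
            = ∑ x, (F x (p' x) - F x (p x)) := by
          apply Finset.sum_subset (Finset.subset_univ _)
          intro x _ hx
          simp only [Finset.mem_insert, Finset.mem_singleton] at hx
          push_neg at hx
          rw [hother x hx.1 hx.2, sub_self]
        rw [Finset.sum_pair hne'] at hd
        rw [Finset.sum_sub_distrib, hval', hvalω] at hd
        linarith
      have hp'1 : ∑ x, p' x = 1 := by
        have := key (fun _ v => v)
        rw [this, hpsum]; ring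
      have hp'nn : ∀ x, 0 ≤ p' x := by
        intro x
        by_cases h1 : x = ω'
        · rw [h1, hval']; linarith [hpnn ω']
        · by_cases h2 : x = ω
          · rw [h2, hvalω]; linarith
          · rw [hother x h1 h2]; exact hpnn x
      have hmem : p' ∈ Amb q γ := by
        refine ⟨⟨hp'nn, hp'1⟩, ?_⟩
        unfold tv; linarith
      have hobj := hopt p' hmem
      have hkh := key (fun x v => v * h x)
      have hstrict : h ω < h ω' := hmax ω hω
      rw [hkh] at hobj
      nlinarith
    by_cases hA : ∃ ω, ω ≠ ω' ∧ q ω < p ω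
    · obtain ⟨ω, hω, hqp⟩ := hA
      set δ := p ω - q ω with hδ
      apply contra ω hω δ (by linarith) (by linarith [(hqpos ω).le])
      set p' := Function.update (Function.update p ω (p ω - δ)) ω' (p ω' + δ) with hp'
      have hne' : ω' ≠ ω := fun e => hω e.symm
      have key : ∑ x, |p' x - q x| =
          ∑ x, |p x - q x| + (|p ω' + δ - q ω'| - |p ω' - q ω'|)
            + (|p ω - δ - q ω| - |p ω - q ω|) := by
        have hval' : p' ω' = p ω' + δ := by simp [hp']
        have hvalω : p' ω = p ω - δ := by simp [hp', Function.update_of_ne hω]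
        have hother : ∀ x, x ≠ ω' → x ≠ ω → p' x = p x := by
          intro x h1 h2
          simp [hp', Function.update_of_ne h1, Function.update_of_ne h2]
        have hd : ∑ x ∈ ({ω', ω} : Finset Ω), (|p' x - q x| - |p x - q x|)
            = ∑ x, (|p' x - q x| - |p x - q x|) := by
          apply Finset.sum_subset (Finset.subset_univ _)
          intro x _ hx
          simp only [Finset.mem_insert, Finset.mem_singleton] at hx
          push_neg at hx
          rw [hother x hx.1 hx.2, sub_self]
        rw [Finset.sum_pair hne'] at hd
        rw [Finset.sum_sub_distrib, hval', hvalω] at hd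
        linarith
      rw [key]
      have h1 : |p ω - δ - q ω| = 0 := by rw [hδ]; simp
      have h2 : |p ω - q ω| = δ := by rw [hδ, abs_of_pos]; linarith
      have h3 : |p ω' + δ - q ω'| ≤ |p ω' - q ω'| + δ := by
        have he : p ω' + δ - q ω' = (p ω' - q ω') + δ := by ring
        rw [he]
        calc |(p ω' - q ω') + δ| ≤ |p ω' - q ω'| + |δ| := abs_add_le _ _
        _ = |p ω' - q ω'| + δ := by rw [abs_of_pos (show (0:ℝ) < δ by linarith)]
      linarith
    · push_neg at hA
      -- Case B: p ≤ q off ω'; then tv p q = p ω' - q ω' < γ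
      have hsum0 : ∑ x, (p x - q x) = 0 := by
        rw [Finset.sum_sub_distrib, hpsum, hqsum]; ring
      have herase : p ω' - q ω' = ∑ x ∈ Finset.univ.erase ω', (q x - p x) := by
        have this : (p ω' - q ω') + ∑ x ∈ Finset.univ.erase ω', (p x - q x) = 0 := by
          have h0 := Finset.add_sum_erase Finset.univ (fun x => p x - q x) (Finset.mem_univ ω')
          rw [h0, hsum0]
        have h2 : ∑ x ∈ Finset.univ.erase ω', (q x - p x)
            = - ∑ x ∈ Finset.univ.erase ω', (p x - q x) := by
          rw [← Finset.sum_neg_distrib]; apply Finset.sum_congr rfl; intros; ring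
        rw [h2]; linarith
      have hge : 0 ≤ p ω' - q ω' := by
        rw [herase]
        apply Finset.sum_nonneg
        intro x hx
        have := hA x (Finset.ne_of_mem_erase hx)
        linarith
      have hSval : ∑ x, |p x - q x| = 2 * (p ω' - q ω') := by
        rw [← Finset.add_sum_erase Finset.univ (fun x => |p x - q x|) (Finset.mem_univ ω')]
        have h1 : |p ω' - q ω'| = p ω' - q ω' := abs_of_nonneg hge
        have h2 : ∑ x ∈ Finset.univ.erase ω', |p x - q x|
            = ∑ x ∈ Finset.univ.erase ω', (q x - p x) := by
          apply Finset.sum_congr rfl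
          intro x hx
          rw [abs_sub_comm, abs_of_nonneg]
          linarith [hA x (Finset.ne_of_mem_erase hx)]
        rw [h1, h2, ← herase]; ring
      obtain ⟨ω, hω, hppos⟩ := hex
      have hslack : 0 < γ - (p ω' - q ω') := by
        have := hqpos ω'
        linarith
      set δ := min (p ω) (γ - (p ω' - q ω')) with hδ
      have hδ0 : 0 < δ := lt_min hppos hslack
      apply contra ω hω δ hδ0 (min_le_left _ _)
      set p' := Function.update (Function.update p ω (p ω - δ)) ω' (p ω' + δ) with hp'
      have hne' : ω' ≠ ω := fun e => hω e.symm
      have key : ∑ x, |p' x - q x| =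
          ∑ x, |p x - q x| + (|p ω' + δ - q ω'| - |p ω' - q ω'|)
            + (|p ω - δ - q ω| - |p ω - q ω|) := by
        have hval' : p' ω' = p ω' + δ := by simp [hp']
        have hvalω : p' ω = p ω - δ := by simp [hp', Function.update_of_ne hω]
        have hother : ∀ x, x ≠ ω' → x ≠ ω → p' x = p x := by
          intro x h1 h2
          simp [hp', Function.update_of_ne h1, Function.update_of_ne h2]
        have hd : ∑ x ∈ ({ω', ω} : Finset Ω), (|p' x - q x| - |p x - q x|)
            = ∑ x, (|p' x - q x| - |p x - q x|) := by
          apply Finset.sum_subset (Finset.subset_univ _)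
          intro x _ hx
          simp only [Finset.mem_insert, Finset.mem_singleton] at hx
          push_neg at hx
          rw [hother x hx.1 hx.2, sub_self]
        rw [Finset.sum_pair hne'] at hd
        rw [Finset.sum_sub_distrib, hval', hvalω] at hd
        linarith
      rw [key, hSval]
      have h3 : |p ω' + δ - q ω'| ≤ |p ω' - q ω'| + δ := by
        have he : p ω' + δ - q ω' = (p ω' - q ω') + δ := by ring
        rw [he]
        calc |(p ω' - q ω') + δ| ≤ |p ω' - q ω'| + |δ| := abs_add_le _ _
        _ = |p ω' - q ω'| + δ := by rw [abs_of_pos hδ0]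
      have h4 : |p ω - δ - q ω| ≤ |p ω - q ω| + δ := by
        have he : p ω - δ - q ω = (p ω - q ω) + (-δ) := by ring
        rw [he]
        calc |(p ω - q ω) + (-δ)| ≤ |p ω - q ω| + |(-δ)| := abs_add_le _ _
        _ = |p ω - q ω| + δ := by rw [abs_neg, abs_of_pos hδ0]
      have h5 : δ ≤ γ - (p ω' - q ω') := min_le_right _ _
      linarith
  exact ⟨main, lt_of_lt_of_le hγ0 main⟩
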